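/- Let f : ℝ^d → ℝ be continuously differentiable and strictly convex, let M be a positive semidefinite matrix inducing the seminorm ‖x‖_M = √(xᵀMx), and suppose ∇f(x) lies in the image of M for all x. For y ∈ ℝ^d and r > 0, let z be a minimizer of f over the ball {x : ‖x − y‖_M ≤ r}. Then either ∇f(z) = 0 (z is a global minimizer of f), or ‖z − y‖_M = r and ∇f(z) = −(‖∇f(z)‖_{M†}/r) · M(z − y), where M† is the pseudoinverse of M. -/

import Mathlib

open Matrix Set Filter Topology RealInnerProductSpace

/-- The four Moore–Penrose conditions characterizing the pseudoinverse. -/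
def IsMoorePenrose {d : ℕ} (A B : Matrix (Fin d) (Fin d) ℝ) : Prop :=
  A * B * A = A ∧ B * A * B = B ∧ (A * B)ᵀ = A * B ∧ (B * A)ᵀ = B * A

/-- Optimality characterization of a ball-constrained minimizer of a strictly convex,
continuously differentiable function. -/
theorem stmt0 {d : ℕ} (M Mdag : Matrix (Fin d) (Fin d) ℝ)
    (hM : M.PosSemidef) (hMdag : IsMoorePenrose M Mdag)
    (f : (Fin d → ℝ) → ℝ) (g : (Fin d → ℝ) → (Fin d → ℝ))
    (hdiff : Differentiable ℝ f)
    (hgrad : ∀ x v, fderiv ℝ f x v = g x ⬝ᵥ v)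
    (hgcont : Continuous g)
    (hconv : StrictConvexOn ℝ Set.univ f)
    (him : ∀ x, g x ∈ Set.range M.mulVec)
    (y : Fin d → ℝ) (r : ℝ) (hr : 0 < r)
    (z : Fin d → ℝ)
    (hzball : Real.sqrt ((z - y) ⬝ᵥ M.mulVec (z - y)) ≤ r)
    (hzmin : ∀ x, Real.sqrt ((x - y) ⬝ᵥ M.mulVec (x - y)) ≤ r → f z ≤ f x) :
    g z = 0 ∨
      (Real.sqrt ((z - y) ⬝ᵥ M.mulVec (z - y)) = r ∧
        g z = (-(Real.sqrt (g z ⬝ᵥ Mdag.mulVec (g z)) / r)) • M.mulVec (z - y)) := by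
  classical
  by_cases hg : g z = 0
  · exact Or.inl hg
  right
  open scoped MatrixOrder in
  set N := CFC.sqrt M with hNdef
  open scoped MatrixOrder in
  have hNs : N * N = M := CFC.sqrt_mul_sqrt_self M hM.nonneg
  open scoped MatrixOrder in
  have hNsym : Nᵀ = N := by
    have := (CFC.sqrt_nonneg M).posSemidef.1
    rwa [Matrix.IsHermitian, conjTranspose_eq_transpose_of_trivial] at this
  have hMsym : Mᵀ = M := by
    have := hM.1
    rwa [Matrix.IsHermitian, conjTranspose_eq_transpose_of_trivial] at this
  have hswapN : ∀ v u : Fin d → ℝ, v ⬝ᵥ N *ᵥ u = (N *ᵥ v) ⬝ᵥ u := by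
    intro v u
    rw [Matrix.dotProduct_mulVec, ← Matrix.mulVec_transpose, hNsym]
  have hswapM : ∀ v u : Fin d → ℝ, v ⬝ᵥ M *ᵥ u = (M *ᵥ v) ⬝ᵥ u := by
    intro v u
    rw [Matrix.dotProduct_mulVec, ← Matrix.mulVec_transpose, hMsym]
  -- the Euclidean space embedding
  set e := (WithLp.linearEquiv 2 ℝ (Fin d → ℝ)).symm with hedef
  have hinner : ∀ v u : Fin d → ℝ, ⟪e v, e u⟫ = v ⬝ᵥ u := by
    intro v u
    simp [hedef, PiLp.inner_apply, RCLike.inner_apply, dotProduct, WithLp.linearEquiv,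
      mul_comm]
  have key : ∀ v : Fin d → ℝ, Real.sqrt (v ⬝ᵥ M *ᵥ v) = ‖e (N *ᵥ v)‖ := by
    intro v
    have h1 : v ⬝ᵥ M *ᵥ v = ⟪e (N *ᵥ v), e (N *ᵥ v)⟫ := by
      rw [hinner, ← hNs, ← Matrix.mulVec_mulVec, hswapN]
    rw [h1, real_inner_self_eq_norm_sq, Real.sqrt_sq (norm_nonneg _)]
  -- the ray through the gradient
  obtain ⟨w, hw⟩ := him z
  have hMwN : M *ᵥ w = N *ᵥ (N *ᵥ w) := by rw [Matrix.mulVec_mulVec, hNs]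
  have hb0 : e (N *ᵥ w) ≠ 0 := by
    intro h
    apply hg
    have : N *ᵥ w = 0 := by
      simpa [hedef] using h
    rw [← hw, hMwN, this, Matrix.mulVec_zero]
  have hbnorm : 0 < ‖e (N *ᵥ w)‖ := norm_pos_iff.mpr hb0
  -- step 1 : boundary
  have hbound : Real.sqrt ((z - y) ⬝ᵥ M.mulVec (z - y)) = r := by
    by_contra hne
    have hlt : Real.sqrt ((z - y) ⬝ᵥ M.mulVec (z - y)) < r := lt_of_le_of_ne hzball hne
    have hq : Continuous fun x : Fin d → ℝ => Real.sqrt ((x - y) ⬝ᵥ M *ᵥ (x - y)) := by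
      apply Real.continuous_sqrt.comp
      simp only [dotProduct, Matrix.mulVec]
      fun_prop
    have hU : IsOpen {x : Fin d → ℝ | Real.sqrt ((x - y) ⬝ᵥ M *ᵥ (x - y)) < r} :=
      isOpen_Iio.preimage hq
    have hmin : IsLocalMin f z :=
      Filter.eventually_of_mem (hU.mem_nhds hlt) fun x hx => hzmin x (le_of_lt hx)
    have hzero := hmin.fderiv_eq_zero
    apply hg
    funext i
    have h := hgrad z (Pi.single i 1)
    rw [hzero] at h
    simpa [dotProduct, Pi.single_apply] using h.symm
  have hanorm : ‖e (N *ᵥ (z - y))‖ = r := by rw [← key, hbound]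
  -- the test point
  set x₀ := y + (-(r / ‖e (N *ᵥ w)‖)) • w with hx₀
  have hx₀y : x₀ - y = (-(r / ‖e (N *ᵥ w)‖)) • w := by simp [hx₀]
  -- membership of the segment in the ball
  have hmem : ∀ t ∈ Set.Icc (0:ℝ) 1,
      Real.sqrt ((z + t • (x₀ - z) - y) ⬝ᵥ M *ᵥ (z + t • (x₀ - z) - y)) ≤ r := by
    intro t ht
    have hrw : z + t • (x₀ - z) - y = (1 - t) • (z - y) + t • (x₀ - y) := by
      ext i; simp [Pi.add_apply, Pi.sub_apply, Pi.smul_apply]; ring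
    rw [key, hrw, Matrix.mulVec_add, Matrix.mulVec_smul, Matrix.mulVec_smul, _root_.map_add,
      _root_.map_smul, _root_.map_smul]
    calc ‖(1 - t) • e (N *ᵥ (z - y)) + t • e (N *ᵥ (x₀ - y))‖
        ≤ ‖(1 - t) • e (N *ᵥ (z - y))‖ + ‖t • e (N *ᵥ (x₀ - y))‖ := norm_add_le _ _
      _ = (1 - t) * ‖e (N *ᵥ (z - y))‖ + t * ‖e (N *ᵥ (x₀ - y))‖ := by
          rw [norm_smul, norm_smul, Real.norm_eq_abs, Real.norm_eq_abs,
            abs_of_nonneg (by linarith [ht.2]), abs_of_nonneg ht.1]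
      _ ≤ (1 - t) * r + t * r := by
          have h1 : ‖e (N *ᵥ (x₀ - y))‖ = r := by
            rw [hx₀y, Matrix.mulVec_smul, _root_.map_smul, norm_smul, Real.norm_eq_abs, abs_neg,
              abs_of_nonneg (div_nonneg hr.le (norm_nonneg _)), div_mul_cancel₀]
            exact ne_of_gt hbnorm
          rw [h1, hanorm]
      _ = r := by ring
  -- the variational inequality
  have hvar : 0 ≤ g z ⬝ᵥ (x₀ - z) := by
    have hline : HasDerivAt (fun t : ℝ => z + t • (x₀ - z)) (x₀ - z) 0 := by
      simpa using ((hasDerivAt_id (0:ℝ)).smul_const (x₀ - z)).const_add z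
    have hφ : HasDerivAt (fun t : ℝ => f (z + t • (x₀ - z))) (g z ⬝ᵥ (x₀ - z)) 0 := by
      have hf : HasFDerivAt f (fderiv ℝ f z) (z + (0:ℝ) • (x₀ - z)) := by
        simpa using (hdiff z).hasFDerivAt
      have hc := hf.comp_hasDerivAt 0 hline
      simp [hgrad] at hc
      rw [dotProduct_sub]
      exact hc
    have h1 : Tendsto (slope (fun t : ℝ => f (z + t • (x₀ - z))) 0) (𝓝[>] 0)
        (𝓝 (g z ⬝ᵥ (x₀ - z))) :=
      (hasDerivAt_iff_tendsto_slope.mp hφ).mono_left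
        (nhdsWithin_mono 0 fun t ht => ne_of_gt ht)
    refine ge_of_tendsto h1 ?_
    filter_upwards [Ioc_mem_nhdsGT_of_mem (Set.left_mem_Ico.mpr one_pos)] with t ht
    have hfz : f z ≤ f (z + t • (x₀ - z)) := hzmin _ (hmem t ⟨ht.1.le, ht.2⟩)
    rw [slope_def_field]
    apply div_nonneg _ (by linarith [ht.1])
    simpa using hfz
  -- computing the two dot products
  have hgzw : g z ⬝ᵥ w = ‖e (N *ᵥ w)‖ ^ 2 := by
    rw [← hw, dotProduct_comm, hMwN, hswapN, ← hinner, real_inner_self_eq_norm_sq]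
  have hgzx₀ : g z ⬝ᵥ (x₀ - y) = -(r * ‖e (N *ᵥ w)‖) := by
    rw [hx₀y, dotProduct_smul, smul_eq_mul, hgzw]
    field_simp
  have hinner_ab : ⟪e (N *ᵥ (z - y)), e (N *ᵥ w)⟫ = g z ⬝ᵥ (z - y) := by
    rw [hinner, ← hswapN, ← hMwN, hw]
    exact dotProduct_comm _ _
  -- cauchy-schwarz equality
  have hCS : ⟪e (N *ᵥ (z - y)), e (N *ᵥ w)⟫ =
      -(‖e (N *ᵥ (z - y))‖ * ‖e (N *ᵥ w)‖) := by
    have hsplit : g z ⬝ᵥ (x₀ - z) = g z ⬝ᵥ (x₀ - y) - g z ⬝ᵥ (z - y) := by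
      rw [← dotProduct_sub]
      congr 1
      ext i
      simp
    have hle : g z ⬝ᵥ (z - y) ≤ -(r * ‖e (N *ᵥ w)‖) := by
      rw [hsplit, hgzx₀] at hvar
      linarith
    have hge := (abs_le.mp (abs_real_inner_le_norm (e (N *ᵥ (z - y))) (e (N *ᵥ w)))).1
    rw [hinner_ab, hanorm] at hge ⊢
    linarith
  have heqcase : ‖e (N *ᵥ w)‖ • e (N *ᵥ (z - y)) = (-‖e (N *ᵥ (z - y))‖) • e (N *ᵥ w) := by
    have h : ⟪e (N *ᵥ (z - y)), -(e (N *ᵥ w))⟫ = ‖e (N *ᵥ (z - y))‖ * ‖-(e (N *ᵥ w))‖ := by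
      rw [inner_neg_right, hCS, norm_neg]; ring
    have := inner_eq_norm_mul_iff_real.mp h
    rw [norm_neg] at this
    rw [this]
    module
  -- transfer back through N
  have hfinal : ‖e (N *ᵥ w)‖ • (M *ᵥ (z - y)) = (-r) • g z := by
    have happly := congrArg (fun v => N *ᵥ (e.symm v)) heqcase
    simp only [_root_.map_smul, Matrix.mulVec_smul] at happly
    have h1 : e.symm (e (N *ᵥ (z - y))) = N *ᵥ (z - y) := e.symm_apply_apply _
    have h2 : e.symm (e (N *ᵥ w)) = N *ᵥ w := e.symm_apply_apply _
    rw [h1, h2] at happly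
    rw [Matrix.mulVec_mulVec, hNs] at happly
    rw [happly, hanorm, ← hMwN, hw]
  have hdag : Real.sqrt (g z ⬝ᵥ Mdag *ᵥ g z) = ‖e (N *ᵥ w)‖ := by
    have h1 : g z ⬝ᵥ Mdag *ᵥ g z = w ⬝ᵥ M *ᵥ w := by
      rw [← hw, Matrix.mulVec_mulVec, ← hswapM, Matrix.mulVec_mulVec, ← mul_assoc, hMdag.1]
    have h2 : w ⬝ᵥ M *ᵥ w = ‖e (N *ᵥ w)‖ ^ 2 := by
      rw [hMwN, hswapN, ← hinner, real_inner_self_eq_norm_sq]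
    rw [h1, h2, Real.sqrt_sq (norm_nonneg _)]
  refine ⟨hbound, ?_⟩
  rw [hdag]
  have h2 : (-r) • g z = (-r) • ((-(‖e (N *ᵥ w)‖ / r)) • M *ᵥ (z - y)) := by
    rw [← hfinal, smul_smul]
    congr 1
    field_simp
  exact smul_right_injective _ (neg_ne_zero.mpr (ne_of_gt hr)) h2
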